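/- Fix integers m ≥ 2 and 0 < m₂ < m. On ℤ², define x ∼ y iff x + (j₁m, j₂m) = y + (j₂m₂, 0) for some j₁, j₂ ∈ ℤ. Then every point of ℤ² is ∼-equivalent to exactly one point of the discrete parallelogram P_m = {(x₁,x₂) ∈ ℤ² : -m/2 ≤ x₂ < m/2, -m/2 - (m₂/m)x₂ ≤ x₁ < m/2 - (m₂/m)x₂}. -/

import Mathlib

lemma exists_unique_rep (n a : ℤ) (hn : 0 < n) :
    ∃! t : ℤ, (-n ≤ 2*t ∧ 2*t < n) ∧ ∃ j : ℤ, t = a + j*n := by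
  refine ⟨a + (-((2*a+n) / (2*n)))*n, ⟨?_, ⟨_, rfl⟩⟩, ?_⟩
  · have h1 : 0 ≤ (2*a+n) % (2*n) := Int.emod_nonneg _ (by omega)
    have h2 : (2*a+n) % (2*n) < 2*n := Int.emod_lt_of_pos _ (by omega)
    have h3 : (2*a+n) % (2*n) = (2*a+n) - 2*n * ((2*a+n)/(2*n)) := Int.emod_def _ _
    constructor <;> nlinarith [h1, h2, h3]
  · rintro t' ⟨⟨hl, hr⟩, j', rfl⟩
    have h1 : 0 ≤ (2*a+n) % (2*n) := Int.emod_nonneg _ (by omega)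
    have h2 : (2*a+n) % (2*n) < 2*n := Int.emod_lt_of_pos _ (by omega)
    have h3 : (2*a+n) % (2*n) = (2*a+n) - 2*n * ((2*a+n)/(2*n)) := Int.emod_def _ _
    set j := -((2*a+n)/(2*n)) with hj
    have hd : -n < (j' - j)*n ∧ (j' - j)*n < n := by constructor <;> nlinarith
    have : j' = j := by
      rcases lt_trichotomy j' j with h | h | h
      · nlinarith [hd.1]
      · exact h
      · nlinarith [hd.2]
    rw [this]

lemma cond_iff (m m₂ p₁ p₂ : ℤ) (hm : 0 < m) :
    (-(m : ℝ) / 2 ≤ (p₂ : ℝ) ∧ (p₂ : ℝ) < (m : ℝ) / 2 ∧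
        -(m : ℝ) / 2 - ((m₂ : ℝ) / m) * p₂ ≤ (p₁ : ℝ) ∧
        (p₁ : ℝ) < (m : ℝ) / 2 - ((m₂ : ℝ) / m) * p₂) ↔
    (-m ≤ 2*p₂ ∧ 2*p₂ < m ∧ -(m^2) ≤ 2*(m*p₁+m₂*p₂) ∧ 2*(m*p₁+m₂*p₂) < m^2) := by
  have hm' : (0:ℝ) < m := by exact_mod_cast hm
  have hb : ((m₂:ℝ)/m*p₂)*m = m₂*p₂ := by field_simp
  constructor
  · rintro ⟨h1, h2, h3, h4⟩
    refine ⟨?_, ?_, ?_, ?_⟩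
    · exact_mod_cast (by linarith : -(m:ℝ) ≤ 2*p₂)
    · exact_mod_cast (by linarith : 2*(p₂:ℝ) < m)
    · have h3' := mul_le_mul_of_nonneg_right h3 hm'.le
      exact_mod_cast (by nlinarith [h3', hb] : -((m:ℝ)^2) ≤ 2*(m*p₁+m₂*p₂))
    · have h4' := mul_lt_mul_of_pos_right h4 hm'
      exact_mod_cast (by nlinarith [h4', hb] : 2*((m:ℝ)*p₁+m₂*p₂) < m^2)
  · rintro ⟨h1, h2, h3, h4⟩
    have h1' : -(m:ℝ) ≤ 2*p₂ := by exact_mod_cast h1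
    have h2' : 2*(p₂:ℝ) < m := by exact_mod_cast h2
    have h3' : -((m:ℝ)^2) ≤ 2*(m*p₁+m₂*p₂) := by exact_mod_cast h3
    have h4' : 2*((m:ℝ)*p₁+m₂*p₂) < m^2 := by exact_mod_cast h4
    have key : ((p₁:ℝ) + (m₂:ℝ)/m * p₂) = ((m:ℝ)*p₁+m₂*p₂)/m := by
      field_simp
    refine ⟨by linarith, by linarith, ?_, ?_⟩
    · rw [sub_le_iff_le_add, key, le_div_iff₀ hm']
      nlinarith
    · rw [lt_sub_iff_add_lt, key, div_lt_iff₀ hm']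
      nlinarith

theorem parallelogram_representatives (m m₂ : ℤ) (hm : 2 ≤ m) (h2 : 0 < m₂)
    (h3 : m₂ < m) (x : ℤ × ℤ) :
    ∃! p : ℤ × ℤ,
      (-(m : ℝ) / 2 ≤ (p.2 : ℝ) ∧ (p.2 : ℝ) < (m : ℝ) / 2 ∧
        -(m : ℝ) / 2 - ((m₂ : ℝ) / m) * p.2 ≤ (p.1 : ℝ) ∧
        (p.1 : ℝ) < (m : ℝ) / 2 - ((m₂ : ℝ) / m) * p.2) ∧
      ∃ j₁ j₂ : ℤ, x + (j₁ * m, j₂ * m) = p + (j₂ * m₂, 0) := by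
  have hm0 : (0:ℤ) < m := by omega
  obtain ⟨p₂, ⟨hb2, k₂, hk₂⟩, huniq₂⟩ := exists_unique_rep m x.2 hm0
  obtain ⟨t, ⟨hbt, k₁, hkt⟩, huniqt⟩ :=
    exists_unique_rep (m^2) (m*(x.1 - k₂*m₂) + m₂*p₂) (by positivity)
  set p₁ : ℤ := x.1 - k₂*m₂ + k₁*m with hp₁
  have ht : t = m*p₁ + m₂*p₂ := by rw [hkt, hp₁]; ring
  refine ⟨(p₁, p₂), ⟨?_, k₁, k₂, ?_⟩, ?_⟩
  · rw [cond_iff m m₂ p₁ p₂ hm0]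
    exact ⟨hb2.1, hb2.2, by rw [← ht]; exact hbt.1, by rw [← ht]; exact hbt.2⟩
  · have : x.2 + k₂*m = p₂ := by omega
    ext <;> simp [hp₁] <;> omega
  · rintro ⟨q₁, q₂⟩ ⟨hq, j₁, j₂, heq⟩
    rw [cond_iff m m₂ q₁ q₂ hm0] at hq
    have he1 : x.1 + j₁*m = q₁ + j₂*m₂ := congrArg Prod.fst heq
    have he2 : x.2 + j₂*m = q₂ := by have := congrArg Prod.snd heq; simpa using this
    have hq₂ : q₂ = p₂ := huniq₂ q₂ ⟨⟨hq.1, hq.2.1⟩, j₂, by omega⟩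
    have hj₂ : j₂ = k₂ := by
      have : j₂*m = k₂*m := by omega
      exact mul_right_cancel₀ (by omega) this
    have hqt : m*q₁ + m₂*q₂ = t := by
      refine huniqt _ ⟨⟨hq.2.2.1, hq.2.2.2⟩, j₁, ?_⟩
      have hq1 : q₁ = x.1 - j₂*m₂ + j₁*m := by omega
      rw [hq1, hq₂, hj₂]; ring
    have hfin : q₁ = p₁ := by
      rw [hq₂] at hqt
      have h := hqt.trans ht
      have hmm : m*q₁ = m*p₁ := by omega
      exact mul_left_cancel₀ (by omega) hmm
    simp [hfin, hq₂]
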